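/- Let C₁, C₂ ⊆ 𝔽₂ⁿ be binary codes containing the zero vector, with kernels Ker(C₁), Ker(C₂), and let C be their Plotkin construction. Then the map (x, y) ↦ (x | x+y) is a bijection from Ker(C₁) × Ker(C₂) onto Ker(C); in particular |Ker(C)| = |Ker(C₁)| · |Ker(C₂)|. -/
import Mathlib


def plotkin {n : ℕ} (C₁ C₂ : Set (Fin n → ZMod 2)) : Set (Fin (n + n) → ZMod 2) :=
  {w | ∃ u ∈ C₁, ∃ v ∈ C₂, w = Fin.append u (u + v)}

def ker {m : ℕ} (C : Set (Fin m → ZMod 2)) : Set (Fin m → ZMod 2) :=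
  {x | (x + ·) '' C = C}

lemma add_self_zero {m : ℕ} (x : Fin m → ZMod 2) : x + x = 0 := by
  funext i
  have : ∀ a : ZMod 2, a + a = 0 := by decide
  exact this (x i)

lemma mem_ker_iff {m : ℕ} (C : Set (Fin m → ZMod 2)) (x : Fin m → ZMod 2) :
    x ∈ ker C ↔ ∀ c ∈ C, x + c ∈ C := by
  constructor
  · intro h c hc
    have : x + c ∈ (x + ·) '' C := Set.mem_image_of_mem _ hc
    rwa [h] at this
  · intro h
    apply Set.Subset.antisymm
    · rintro _ ⟨c, hc, rfl⟩
      exact h c hc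
    · intro c hc
      refine ⟨x + c, h c hc, ?_⟩
      simp only
      rw [← add_assoc, add_self_zero, zero_add]

lemma append_add {n : ℕ} (u u' v v' : Fin n → ZMod 2) :
    Fin.append (u + u') (v + v') = Fin.append u v + Fin.append u' v' := by
  funext i
  refine Fin.addCases (fun j => ?_) (fun j => ?_) i
  · simp only [Fin.append_left, Pi.add_apply]
  · simp only [Fin.append_right, Pi.add_apply]

lemma append_split {n : ℕ} (z : Fin (n + n) → ZMod 2) :
    z = Fin.append (fun i => z (Fin.castAdd n i)) (fun i => z (Fin.natAdd n i)) := by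
  funext i
  refine Fin.addCases (fun j => ?_) (fun j => ?_) i
  · simp only [Fin.append_left]
  · simp only [Fin.append_right]

theorem plotkin_ker_bij {n : ℕ} (C₁ C₂ : Set (Fin n → ZMod 2))
    (h₁ : (0 : Fin n → ZMod 2) ∈ C₁) (h₂ : (0 : Fin n → ZMod 2) ∈ C₂) :
    Set.BijOn (fun p : (Fin n → ZMod 2) × (Fin n → ZMod 2) => Fin.append p.1 (p.1 + p.2))
      (ker C₁ ×ˢ ker C₂) (ker (plotkin C₁ C₂)) ∧
    Nat.card (ker (plotkin C₁ C₂)) = Nat.card (ker C₁) * Nat.card (ker C₂) := by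
  have hbij : Set.BijOn (fun p : (Fin n → ZMod 2) × (Fin n → ZMod 2) =>
      Fin.append p.1 (p.1 + p.2)) (ker C₁ ×ˢ ker C₂) (ker (plotkin C₁ C₂)) := by
    refine ⟨?_, ?_, ?_⟩
    · -- maps to
      rintro ⟨x, y⟩ ⟨hx, hy⟩
      rw [mem_ker_iff] at hx hy ⊢
      rintro c ⟨u, hu, v, hv, rfl⟩
      refine ⟨x + u, hx u hu, y + v, hy v hv, ?_⟩
      rw [← append_add]
      abel_nf
    · -- injective
      rintro ⟨x, y⟩ _ ⟨x', y'⟩ _ h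
      simp only at h
      have hx : x = x' := by
        funext i
        have := congrFun h (Fin.castAdd n i)
        simpa [Fin.append_left] using this
      have hxy : x + y = x' + y' := by
        funext i
        have := congrFun h (Fin.natAdd n i)
        simpa only [Fin.append_right, Pi.add_apply] using this
      subst hx
      have : y = y' := by
        have := congrArg (fun w => x + w) hxy
        simpa [← add_assoc, add_self_zero] using this
      exact Prod.ext rfl this
    · -- surjective onto
      rintro z hz
      rw [mem_ker_iff] at hz
      set a : Fin n → ZMod 2 := fun i => z (Fin.castAdd n i) with ha
      set b : Fin n → ZMod 2 := fun i => z (Fin.natAdd n i) with hb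
      refine ⟨(a, a + b), ⟨?_, ?_⟩, ?_⟩
      · -- a ∈ ker C₁
        rw [mem_ker_iff]
        intro u hu
        have : z + Fin.append u (u + 0) ∈ plotkin C₁ C₂ :=
          hz _ ⟨u, hu, 0, h₂, rfl⟩
        obtain ⟨u', hu', v', hv', he⟩ := this
        have : a + u = u' := by
          funext i
          have := congrFun he (Fin.castAdd n i)
          simpa [Fin.append_left] using this
        rw [this]; exact hu'
      · -- a + b ∈ ker C₂
        rw [mem_ker_iff]
        intro v hv
        have : z + Fin.append (0 : Fin n → ZMod 2) ((0 : Fin n → ZMod 2) + v) ∈ plotkin C₁ C₂ :=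
          hz _ ⟨(0 : Fin n → ZMod 2), h₁, v, hv, rfl⟩
        obtain ⟨u', hu', v', hv', he⟩ := this
        have h1 : a = u' := by
          funext i
          have := congrFun he (Fin.castAdd n i)
          simpa [Fin.append_left] using this
        have h2 : b + v = u' + v' := by
          funext i
          have := congrFun he (Fin.natAdd n i)
          simp only [Fin.append_right, Pi.add_apply, Pi.zero_apply, zero_add] at this
          exact this
        have : a + b + v = v' := by
          rw [add_assoc, h2, h1, ← add_assoc, add_self_zero, zero_add]
        rw [this]; exact hv'
      · -- z = append a (a + (a+b)) = append a b
        simp only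
        rw [← add_assoc, add_self_zero, zero_add]
        exact (append_split z).symm
  refine ⟨hbij, ?_⟩
  have e1 : (ker C₁ ×ˢ ker C₂ : Set _) ≃ ker (plotkin C₁ C₂) := hbij.equiv _
  rw [← Nat.card_congr e1, Nat.card_congr (Equiv.Set.prod _ _), Nat.card_prod]
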